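/- If a graph G is a subgraph of an edge layer of Q_n and each edge of G is assigned as its color the direction of that edge (i.e., the unique coordinate in which its two endpoints differ), then this edge-coloring of G is very nice. -/

import Mathlib

open SimpleGraph

/-- The hypercube graph `Q_n`: vertices are subsets of `[n]`, adjacent iff one contains the
other and their sizes differ by one. -/
def hypercube (n : ℕ) : SimpleGraph (Finset (Fin n)) where
  Adj A B := (A ⊆ B ∧ B.card = A.card + 1) ∨ (B ⊆ A ∧ A.card = B.card + 1)
  symm := ⟨fun A B h => h.symm⟩
  loopless := ⟨by
    intro A h
    rcases h with ⟨-, h⟩ | ⟨-, h⟩ <;> omega⟩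

/-- The `k`-th edge layer of `Q_n`: the subgraph of the hypercube induced by the vertices of
sizes `k` and `k-1`. -/
def edgeLayer (n k : ℕ) : SimpleGraph (Finset (Fin n)) where
  Adj A B := (hypercube n).Adj A B ∧ (A.card = k ∨ A.card + 1 = k) ∧
    (B.card = k ∨ B.card + 1 = k)
  symm := ⟨fun A B h => ⟨(hypercube n).symm.symm _ _ h.1, h.2.2, h.2.1⟩⟩
  loopless := ⟨fun A h => (hypercube n).loopless.irrefl A h.1⟩

/-- An edge-coloring is nice if on every cycle each color appears an even number of times and
on every path with at least one edge some color appears an odd number of times. -/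
def IsNiceColoring {V C : Type*} [DecidableEq C] (G : SimpleGraph V) (c : Sym2 V → C) : Prop :=
  (∀ (u : V) (w : G.Walk u u), w.IsCycle → ∀ col : C, Even ((w.edges.map c).count col)) ∧
  (∀ (u v : V) (p : G.Walk u v), p.IsPath → 0 < p.length →
    ∃ col : C, Odd ((p.edges.map c).count col))

/-- An edge-coloring is very nice if it is nice and for any two distinct edges of the same
color, every path between them containing no edge of that color has even length. -/
def IsVeryNiceColoring {V C : Type*} [DecidableEq C] (G : SimpleGraph V) (c : Sym2 V → C) :
    Prop :=
  IsNiceColoring G c ∧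
  ∀ e₁ e₂ : Sym2 V, e₁ ∈ G.edgeSet → e₂ ∈ G.edgeSet → e₁ ≠ e₂ → c e₁ = c e₂ →
    ∀ (x y : V) (p : G.Walk x y), p.IsPath → x ∈ e₁ → y ∈ e₂ →
      (∀ e ∈ p.edges, c e ≠ c e₁) → Even p.length

section aux
variable {n k : ℕ} {G : SimpleGraph (Finset (Fin n))}

lemma adj_symmDiff (hG : G ≤ edgeLayer n k) (c : Sym2 (Finset (Fin n)) → Fin n)
    (hc : ∀ A B : Finset (Fin n), G.Adj A B → c s(A, B) ∈ symmDiff A B)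
    {A B : Finset (Fin n)} (h : G.Adj A B) :
    symmDiff A B = {c s(A, B)} := by
  have h' := (hG h).1
  have hcard : (symmDiff A B).card = 1 := by
    rcases h' with ⟨hs, hcd⟩ | ⟨hs, hcd⟩
    · rw [symmDiff_def]
      have he : A \ B = ∅ := Finset.sdiff_eq_empty_iff_subset.mpr hs
      rw [Finset.sup_eq_union, he, Finset.empty_union, Finset.card_sdiff_of_subset hs]
      omega
    · rw [symmDiff_def]
      have he : B \ A = ∅ := Finset.sdiff_eq_empty_iff_subset.mpr hs
      rw [Finset.sup_eq_union, he, Finset.union_empty, Finset.card_sdiff_of_subset hs]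
      omega
  obtain ⟨a, ha⟩ := Finset.card_eq_one.mp hcard
  have hm := hc A B h
  rw [ha] at hm ⊢
  simp only [Finset.mem_singleton] at hm
  rw [hm]

lemma walk_count_odd (hG : G ≤ edgeLayer n k) (c : Sym2 (Finset (Fin n)) → Fin n)
    (hc : ∀ A B : Finset (Fin n), G.Adj A B → c s(A, B) ∈ symmDiff A B) : ∀ {x y : Finset (Fin n)} (w : G.Walk x y) (d : Fin n),
    Odd ((w.edges.map c).count d) ↔ d ∈ symmDiff x y
  | x, _, Walk.nil, d => by simp [Finset.mem_symmDiff]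
  | x, y, @Walk.cons _ _ _ z _ h p, d => by
    have ih := walk_count_odd hG c hc p d
    rw [Walk.edges_cons, List.map_cons, List.count_cons]
    simp only [beq_iff_eq]
    have h1 : d ∈ symmDiff x z ↔ d = c s(x, z) := by
      rw [adj_symmDiff hG c hc h, Finset.mem_singleton]
    rw [Finset.mem_symmDiff] at h1 ih ⊢
    by_cases hdc : c s(x, z) = d
    · rw [if_pos hdc, Nat.odd_add_one, ih]
      have h2 := h1.mpr hdc.symm
      rcases h2 with ⟨ha, hb⟩ | ⟨ha, hb⟩ <;> simp [ha, hb]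
    · rw [if_neg hdc, Nat.add_zero, ih]
      have h2 : ¬ (d ∈ x ∧ d ∉ z ∨ d ∈ z ∧ d ∉ x) := fun hh => hdc (h1.mp hh).symm
      have hxz : (d ∈ x) ↔ (d ∈ z) := by
        constructor <;> intro hh <;> by_contra hn
        · exact h2 (Or.inl ⟨hh, hn⟩)
        · exact h2 (Or.inr ⟨hh, hn⟩)
      rw [hxz]

lemma walk_length_parity (hG : G ≤ edgeLayer n k) : ∀ {x y : Finset (Fin n)} (w : G.Walk x y),
    (w.length + x.card) % 2 = y.card % 2
  | x, _, Walk.nil => by simp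
  | x, y, Walk.cons h p => by
    have ih := walk_length_parity hG p
    have h' := (hG h).1
    rw [Walk.length_cons]
    rcases h' with ⟨-, hcd⟩ | ⟨-, hcd⟩ <;> omega

lemma edge_color_mem (hG : G ≤ edgeLayer n k) (c : Sym2 (Finset (Fin n)) → Fin n)
    (hc : ∀ A B : Finset (Fin n), G.Adj A B → c s(A, B) ∈ symmDiff A B)
    {A B : Finset (Fin n)} (h : G.Adj A B) :
    (c s(A, B) ∈ A ↔ A.card = k) ∧ (c s(A, B) ∈ B ↔ B.card = k) := by
  have hd : c s(A, B) ∈ symmDiff A B := hc A B h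
  obtain ⟨h', hA, hB⟩ := hG h
  rw [Finset.mem_symmDiff] at hd
  rcases h' with ⟨hs, hcd⟩ | ⟨hs, hcd⟩
  · have hAk : A.card + 1 = k ∧ B.card = k := by omega
    rcases hd with ⟨h1, h2⟩ | ⟨h1, h2⟩
    · exact absurd (hs h1) h2
    · constructor
      · constructor
        · intro hx; exact absurd hx h2
        · intro hx; omega
      · simp [h1, hAk.2]
  · have hAk : B.card + 1 = k ∧ A.card = k := by omega
    rcases hd with ⟨h1, h2⟩ | ⟨h1, h2⟩
    · constructor
      · simp [h1, hAk.2]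
      · constructor
        · intro hx; exact absurd hx h2
        · intro hx; omega
    · exact absurd (hs h1) h2

end aux

/-- If `G` is a subgraph of an edge layer of `Q_n` and each edge is colored by its direction
(the unique coordinate in which its endpoints differ), then the coloring is very nice. -/
theorem direction_coloring_very_nice (n k : ℕ) (G : SimpleGraph (Finset (Fin n)))
    (hG : G ≤ edgeLayer n k) (c : Sym2 (Finset (Fin n)) → Fin n)
    (hc : ∀ A B : Finset (Fin n), G.Adj A B → c s(A, B) ∈ symmDiff A B) :
    IsVeryNiceColoring G c := by
  constructor
  · constructor
    · intro u w _ col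
      have := walk_count_odd hG c hc w col
      rw [Nat.even_iff, ← Nat.not_odd_iff, this]
      simp [Finset.mem_symmDiff]
    · intro u v p hp hlen
      have hne : u ≠ v := by
        intro huv
        subst huv
        rw [Walk.isPath_iff_eq_nil] at hp
        subst hp
        simp at hlen
      have hsd : symmDiff u v ≠ ∅ := by
        intro hh
        exact hne (symmDiff_eq_bot.mp hh)
      obtain ⟨d, hd⟩ := Finset.nonempty_iff_ne_empty.mpr hsd
      exact ⟨d, (walk_count_odd hG c hc p d).mpr hd⟩
  · intro e₁ e₂ he₁ he₂ hne hcc x y p hp hx hy havoid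
    induction e₁ using Sym2.ind with | _ A B =>
    induction e₂ using Sym2.ind with | _ C D =>
    rw [mem_edgeSet] at he₁ he₂
    -- d does not change along the path
    have hcount : ((p.edges.map c).count (c s(A, B))) = 0 := by
      rw [List.count_eq_zero]
      intro hmem
      obtain ⟨e, hep, hce⟩ := List.mem_map.mp hmem
      exact havoid e hep hce
    have hnotsd : c s(A, B) ∉ symmDiff x y := by
      rw [← walk_count_odd hG c hc p (c s(A, B))]
      simp [hcount]
    rw [Finset.mem_symmDiff] at hnotsd
    have hdx : c s(A, B) ∈ x ↔ x.card = k := by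
      rcases Sym2.mem_iff.mp hx with rfl | rfl
      · exact (edge_color_mem hG c hc he₁).1
      · exact (edge_color_mem hG c hc he₁).2
    have hdy : c s(A, B) ∈ y ↔ y.card = k := by
      rw [hcc]
      rcases Sym2.mem_iff.mp hy with rfl | rfl
      · exact (edge_color_mem hG c hc he₂).1
      · exact (edge_color_mem hG c hc he₂).2
    have hxk : x.card = k ∨ x.card + 1 = k := by
      rcases Sym2.mem_iff.mp hx with rfl | rfl
      · exact (hG he₁).2.1
      · exact (hG he₁).2.2
    have hyk : y.card = k ∨ y.card + 1 = k := by
      rcases Sym2.mem_iff.mp hy with rfl | rfl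
      · exact (hG he₂).2.1
      · exact (hG he₂).2.2
    have hxy : x.card = y.card := by
      by_cases hh : x.card = k
      · have : y.card = k := hdy.mp (by tauto)
        omega
      · have h1 : c s(A, B) ∉ x := fun hdx' => hh (hdx.mp hdx')
        have h2 : c s(A, B) ∉ y := by tauto
        have : y.card ≠ k := fun hk => h2 (hdy.mpr hk)
        omega
    have := walk_length_parity hG p
    rw [Nat.even_iff]
    omega
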